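/- Suppose h : ℝ^q → ℝ is differentiable with L_h-Lipschitz gradient, B ∈ ℝ^{m×q}, and H : Im(B) → ℝ^q satisfies H(By) well-defined with ‖H(u₁) − H(u₂)‖ ≤ M̄‖u₁ − u₂‖ and y^k = H(By^k) for all k. If Bᵀw^k = −∇h(y^k) for all k and w^{k+1} − w^k ∈ Im(B), then ‖w^{k+1} − w^k‖ ≤ L_h M̄ λ₊₊(BᵀB)^{−1/2} ‖By^{k+1} − By^k‖. -/

import Mathlib

open Filter

section Aux

open RealInnerProductSpace

set_option maxHeartbeats 1600000

private lemma inner_eq_sum_repr' {m : ℕ} (b : OrthonormalBasis (Fin m) ℝ (EuclideanSpace ℝ (Fin m)))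
    (x z : EuclideanSpace ℝ (Fin m)) : ⟪x, z⟫ = ∑ i, b.repr x i * b.repr z i := by
  rw [← b.repr.inner_map_map x z]
  simp only [PiLp.inner_apply, RCLike.inner_apply, starRingEnd_apply, star_trivial]
  exact Finset.sum_congr rfl fun i _ => mul_comm _ _

private lemma key_bound' {q m : ℕ} (B : EuclideanSpace ℝ (Fin q) →L[ℝ] EuclideanSpace ℝ (Fin m))
    (lam : ℝ) (hpos : 0 < lam)
    (hmin : ∀ μ : ℝ, 0 < μ →
      (∃ v : EuclideanSpace ℝ (Fin q), v ≠ 0 ∧ B.adjoint (B v) = μ • v) → lam ≤ μ)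
    (d : EuclideanSpace ℝ (Fin m)) (u : EuclideanSpace ℝ (Fin q)) (hd : d = B u) :
    ‖d‖ ≤ (Real.sqrt lam)⁻¹ * ‖B.adjoint d‖ := by
  set T : EuclideanSpace ℝ (Fin m) →ₗ[ℝ] EuclideanSpace ℝ (Fin m) :=
    (B.comp (B.adjoint)).toLinearMap with hT_def
  have hTapp : ∀ v, T v = B (B.adjoint v) := fun v => rfl
  have hTsym : T.IsSymmetric := by
    intro x z
    rw [hTapp, hTapp]
    calc ⟪B (B.adjoint x), z⟫ = ⟪B.adjoint x, B.adjoint z⟫ :=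
          (ContinuousLinearMap.adjoint_inner_right B _ _).symm
      _ = ⟪x, B (B.adjoint z)⟫ := ContinuousLinearMap.adjoint_inner_left B _ _
  have hn : Module.finrank ℝ (EuclideanSpace ℝ (Fin m)) = m := by simp
  set b := hTsym.eigenvectorBasis hn with hb
  set μ := hTsym.eigenvalues hn with hμ
  have happ : ∀ i, T (b i) = μ i • b i := by
    intro i
    have h0 := hTsym.apply_eigenvectorBasis hn i
    rw [hb, hμ] at *
    exact_mod_cast h0
  have hcoeff : ∀ i, lam * (b.repr d i) ^ 2 ≤ μ i * (b.repr d i) ^ 2 := by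
    intro i
    rcases eq_or_ne (b.repr d i) 0 with hc | hc
    · simp [hc]
    · have hBv : B.adjoint (B (B.adjoint (b i))) = μ i • B.adjoint (b i) := by
        calc B.adjoint (B (B.adjoint (b i))) = B.adjoint (T (b i)) := by rw [hTapp]
          _ = μ i • B.adjoint (b i) := by rw [happ i, map_smul]
      have hBvne : B.adjoint (b i) ≠ 0 := by
        intro h0
        apply hc
        rw [hb, OrthonormalBasis.repr_apply_apply, hd,
          ← ContinuousLinearMap.adjoint_inner_left, h0]
        simp
      have hμpos : 0 < μ i := by
        have h1 : μ i = ‖B.adjoint (b i)‖ ^ 2 := by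
          have h2 : ⟪T (b i), b i⟫ = μ i * ‖b i‖ ^ 2 := by
            rw [happ i, real_inner_smul_left, real_inner_self_eq_norm_sq]
          have h3 : ⟪T (b i), b i⟫ = ‖B.adjoint (b i)‖ ^ 2 := by
            rw [hTapp]
            calc ⟪B (B.adjoint (b i)), b i⟫ = ⟪B.adjoint (b i), B.adjoint (b i)⟫ :=
                  (ContinuousLinearMap.adjoint_inner_right B _ _).symm
              _ = ‖B.adjoint (b i)‖ ^ 2 := real_inner_self_eq_norm_sq _
          have hb1 : ‖b i‖ = 1 := b.orthonormal.1 i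
          rw [h2, hb1] at h3
          simpa using h3
        rw [h1]
        exact pow_pos (norm_pos_iff.mpr hBvne) 2
      have hμlam : lam ≤ μ i := hmin (μ i) hμpos ⟨B.adjoint (b i), hBvne, hBv⟩
      exact mul_le_mul_of_nonneg_right hμlam (sq_nonneg _)
  have hsum : lam * ‖d‖ ^ 2 ≤ ‖B.adjoint d‖ ^ 2 := by
    have hnorm : ‖d‖ ^ 2 = ∑ i, (b.repr d i) ^ 2 := by
      rw [← real_inner_self_eq_norm_sq, inner_eq_sum_repr' b d d]
      exact Finset.sum_congr rfl fun i _ => (sq _).symm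
    have hTd : ⟪d, T d⟫ = ∑ i, μ i * (b.repr d i) ^ 2 := by
      rw [inner_eq_sum_repr' b d (T d)]
      refine Finset.sum_congr rfl fun i _ => ?_
      rw [hb, hTsym.eigenvectorBasis_apply_self_apply hn d i]
      rw [← hb, ← hμ, RCLike.ofReal_real_eq_id]; simp only [id]; ring
    have hTd2 : ⟪d, T d⟫ = ‖B.adjoint d‖ ^ 2 := by
      rw [hTapp]
      calc ⟪d, B (B.adjoint d)⟫ = ⟪B.adjoint d, B.adjoint d⟫ :=
            (ContinuousLinearMap.adjoint_inner_left B _ _).symm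
        _ = ‖B.adjoint d‖ ^ 2 := real_inner_self_eq_norm_sq _
    rw [← hTd2, hTd, hnorm, Finset.mul_sum]
    exact Finset.sum_le_sum fun i _ => hcoeff i
  have hs : 0 < Real.sqrt lam := Real.sqrt_pos.2 hpos
  rw [inv_mul_eq_div, le_div_iff₀ hs]
  have h1 := Real.sqrt_le_sqrt hsum
  rw [Real.sqrt_mul hpos.le, Real.sqrt_sq (norm_nonneg d), Real.sqrt_sq (norm_nonneg _)] at h1
  linarith [h1, mul_comm (Real.sqrt lam) ‖d‖]

end Aux

/-- If ∇h is L_h-Lipschitz, y^k = H(By^k) with H M̄-Lipschitz, Bᵀw^k = −∇h(y^k),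
and w^{k+1} − w^k ∈ Im(B), then
‖w^{k+1} − w^k‖ ≤ L_h M̄ λ₊₊(BᵀB)^{−1/2} ‖By^{k+1} − By^k‖. -/
theorem stmt9 (q m : ℕ)
    (h : EuclideanSpace ℝ (Fin q) → ℝ) (g : EuclideanSpace ℝ (Fin q) → EuclideanSpace ℝ (Fin q))
    (Lh : ℝ)
    (hgrad : ∀ y, HasGradientAt h (g y) y)
    (hlip : ∀ y₁ y₂, ‖g y₁ - g y₂‖ ≤ Lh * ‖y₁ - y₂‖)
    (B : EuclideanSpace ℝ (Fin q) →L[ℝ] EuclideanSpace ℝ (Fin m))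
    (lam : ℝ) (hpos : 0 < lam)
    (heig : ∃ v : EuclideanSpace ℝ (Fin q), v ≠ 0 ∧ B.adjoint (B v) = lam • v)
    (hmin : ∀ μ : ℝ, 0 < μ →
      (∃ v : EuclideanSpace ℝ (Fin q), v ≠ 0 ∧ B.adjoint (B v) = μ • v) → lam ≤ μ)
    (H : EuclideanSpace ℝ (Fin m) → EuclideanSpace ℝ (Fin q)) (Mbar : ℝ)
    (hH : ∀ u₁ u₂, ‖H u₁ - H u₂‖ ≤ Mbar * ‖u₁ - u₂‖)
    (y : ℕ → EuclideanSpace ℝ (Fin q)) (w : ℕ → EuclideanSpace ℝ (Fin m))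
    (hyH : ∀ k, y k = H (B (y k)))
    (hBw : ∀ k, B.adjoint (w k) = -(g (y k)))
    (hwim : ∀ k : ℕ, ∃ u, w (k + 1) - w k = B u)
    (k : ℕ) :
    ‖w (k + 1) - w k‖ ≤ Lh * Mbar * (Real.sqrt lam)⁻¹ * ‖B (y (k + 1)) - B (y k)‖ := by
  obtain ⟨u, hu⟩ := hwim k
  have hA := key_bound' B lam hpos hmin (w (k + 1) - w k) u hu
  have hadj : B.adjoint (w (k + 1) - w k) = -(g (y (k + 1)) - g (y k)) := by
    rw [map_sub, hBw, hBw]; abel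
  have hnormadj : ‖B.adjoint (w (k + 1) - w k)‖ = ‖g (y (k + 1)) - g (y k)‖ := by
    rw [hadj, norm_neg]
  have hgl : ‖g (y (k + 1)) - g (y k)‖ ≤ Lh * ‖y (k + 1) - y k‖ := hlip _ _
  have hyl : ‖y (k + 1) - y k‖ ≤ Mbar * ‖B (y (k + 1)) - B (y k)‖ := by
    have hrw : y (k + 1) - y k = H (B (y (k + 1))) - H (B (y k)) := by
      rw [← hyH, ← hyH]
    rw [hrw]
    exact hH _ _
  by_cases hy : y (k + 1) = y k
  · have hz : B.adjoint (w (k + 1) - w k) = 0 := by rw [hadj, hy]; simp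
    rw [hz, norm_zero, mul_zero] at hA
    rw [hy]
    simp only [sub_self, norm_zero, mul_zero]
    exact hA
  · have hyne : 0 < ‖y (k + 1) - y k‖ := by
      rw [norm_pos_iff]
      exact sub_ne_zero_of_ne hy
    have hLh : 0 ≤ Lh := by
      nlinarith [norm_nonneg (g (y (k + 1)) - g (y k))]
    have hchain : ‖g (y (k + 1)) - g (y k)‖ ≤ Lh * (Mbar * ‖B (y (k + 1)) - B (y k)‖) :=
      le_trans hgl (mul_le_mul_of_nonneg_left hyl hLh)
    have hsinv : (0:ℝ) ≤ (Real.sqrt lam)⁻¹ := by positivity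
    calc ‖w (k + 1) - w k‖ ≤ (Real.sqrt lam)⁻¹ * ‖B.adjoint (w (k + 1) - w k)‖ := hA
      _ = (Real.sqrt lam)⁻¹ * ‖g (y (k + 1)) - g (y k)‖ := by rw [hnormadj]
      _ ≤ (Real.sqrt lam)⁻¹ * (Lh * (Mbar * ‖B (y (k + 1)) - B (y k)‖)) :=
          mul_le_mul_of_nonneg_left hchain hsinv
      _ = Lh * Mbar * (Real.sqrt lam)⁻¹ * ‖B (y (k + 1)) - B (y k)‖ := by ring
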